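/- Let d ≥ 2, let ψ ∈ EuclideanSpace ℂ (Fin d) be a WH SIC fiducial vector, and let φ : Fin d → EuclideanSpace ℂ (Fin d) be an orthonormal basis with φ 0 = ψ. Define the Naimark complement fiducial ψ̃ ∈ EuclideanSpace ℂ (Fin (d−1) × Fin d) by ψ̃ (i, j) = (1/√(d−1)) · (φ (i+1)) j, and for each p ∈ {0,…,d−1}² let D̃ p be the block-diagonal matrix consisting of d−1 diagonal copies of the displacement operator D p. Then ψ̃ is a unit vector and |⟪ψ̃, (D̃ p) ψ̃⟫|² = 1/((d−1)(d²−1)) for every p ∈ {0,…,d−1}² with p ≠ (0,0). -/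

import Mathlib

open Matrix

/-- `τ = -exp(π i / d)`. -/
noncomputable def tau (d : ℕ) : ℂ := -Complex.exp (Real.pi * Complex.I / d)

/-- The Weyl–Heisenberg displacement operator `D p` in dimension `d`, for
`p = (p₁, p₂) ∈ {0, …, d-1}²`: its `(j,k)` entry is `τ^(p₂(p₁+2j))` if `j = k + p₁ mod d`
and `0` otherwise. -/
noncomputable def DispN (d : ℕ) (p : ℕ × ℕ) : Matrix (Fin d) (Fin d) ℂ :=
  Matrix.of fun j k =>
    if (j : ℕ) = ((k : ℕ) + p.1) % d then tau d ^ (p.2 * (p.1 + 2 * (j : ℕ))) else 0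

open Finset in
lemma tau_sq (d : ℕ) : tau d ^ 2 = Complex.exp (2 * Real.pi * Complex.I / d) := by
  rw [tau, neg_sq, sq, ← Complex.exp_add]; congr 1; ring

lemma prim (d : ℕ) (hd : d ≠ 0) : IsPrimitiveRoot (tau d ^ 2) d := by
  rw [tau_sq]; exact Complex.isPrimitiveRoot_exp d hd

lemma trace_DispN (d : ℕ) (hd : 2 ≤ d) (p : ℕ × ℕ) (h1 : p.1 < d) (h2 : p.2 < d)
    (hp : p ≠ (0,0)) : ∑ j : Fin d, DispN d p j j = 0 := by
  have hd0 : d ≠ 0 := by omega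
  rcases Nat.eq_zero_or_pos p.1 with hp1 | hp1
  · have hp2 : p.2 ≠ 0 := by intro h; exact hp (Prod.ext hp1 h)
    set z : ℂ := (tau d ^ 2) ^ p.2 with hz
    have hz1 : z ≠ 1 := by
      intro h
      exact hp2 (Nat.eq_zero_of_dvd_of_lt
        (((prim d hd0).pow_eq_one_iff_dvd p.2).mp h) h2)
    have hzd : z ^ d = 1 := by
      rw [hz, ← pow_mul, mul_comm, pow_mul, (prim d hd0).pow_eq_one, one_pow]
    have hsum : ∑ j : Fin d, DispN d p j j = ∑ j : Fin d, z ^ (j : ℕ) := by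
      apply Finset.sum_congr rfl
      intro j _
      simp only [DispN, Matrix.of_apply, hp1, add_zero, Nat.mod_eq_of_lt j.isLt,
        eq_self_iff_true, if_true]
      rw [hz, ← pow_mul, ← pow_mul]
      congr 1; ring
    rw [hsum, Fin.sum_univ_eq_sum_range, geom_sum_eq hz1, hzd, sub_self, zero_div]
  · apply Finset.sum_eq_zero
    intro j _
    simp only [DispN, Matrix.of_apply]
    rw [if_neg]
    intro h
    rcases Nat.lt_or_ge ((j : ℕ) + p.1) d with hlt | hge
    · rw [Nat.mod_eq_of_lt hlt] at h; omega
    · rw [Nat.mod_eq_sub_mod hge, Nat.mod_eq_of_lt (by omega)] at h; omega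

lemma rows_orthonormal {d : ℕ} (φ : OrthonormalBasis (Fin d) ℂ (EuclideanSpace ℂ (Fin d)))
    (j k : Fin d) :
    ∑ i, (starRingEnd ℂ) (φ i j) * φ i k = if j = k then 1 else 0 := by
  classical
  set M : Matrix (Fin d) (Fin d) ℂ := Matrix.of fun i j => φ i j with hM
  have h1 : M * Mᴴ = 1 := by
    ext i i'
    have h := orthonormal_iff_ite.mp φ.orthonormal i i'
    rw [PiLp.inner_apply] at h
    simp only [RCLike.inner_apply] at h
    have h' := congrArg (starRingEnd ℂ) h
    simp only [map_sum, _root_.map_mul, Complex.conj_conj] at h'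
    simp only [Matrix.mul_apply, Matrix.conjTranspose_apply, Matrix.one_apply, hM,
      Matrix.of_apply, Complex.star_def]
    rw [Finset.sum_congr rfl (fun x _ => mul_comm _ _), h']
    split <;> simp
  have h2 : Mᴴ * M = 1 := mul_eq_one_comm.mp h1
  have h3 := congrFun (congrFun h2 j) k
  simpa only [Matrix.mul_apply, Matrix.conjTranspose_apply, Matrix.one_apply, hM,
    Matrix.of_apply, Complex.star_def] using h3

lemma sum_basis_quad {d : ℕ} (φ : OrthonormalBasis (Fin d) ℂ (EuclideanSpace ℂ (Fin d)))
    (A : Matrix (Fin d) (Fin d) ℂ) :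
    ∑ i, ∑ j, ∑ k, (starRingEnd ℂ) (φ i j) * (A j k * φ i k) = ∑ j, A j j := by
  rw [Finset.sum_comm]
  apply Finset.sum_congr rfl
  intro j _
  rw [Finset.sum_comm]
  have : ∀ k ∈ Finset.univ, (∑ i, (starRingEnd ℂ) (φ i j) * (A j k * φ i k))
      = A j k * (if j = k then 1 else 0) := by
    intro k _
    rw [← rows_orthonormal φ j k, Finset.mul_sum]
    apply Finset.sum_congr rfl
    intro i _; ring
  rw [Finset.sum_congr rfl this]
  simp

/-- Let `d ≥ 2`, `ψ` a WH SIC fiducial vector, `φ` an orthonormal basis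
with `φ 0 = ψ`, and let `ψ̃ (i,j) = (1/√(d-1)) · (φ (i+1)) j` be the Naimark complement
fiducial, with `D̃ p` the block-diagonal sum of `d-1` copies of `D p`.  Then `ψ̃` is a unit
vector and `|⟪ψ̃, D̃ p ψ̃⟫|² = 1/((d-1)(d²-1))` for all `p ≠ (0,0)`. -/
theorem stmt_15 (d : ℕ) (hd : 2 ≤ d)
    (ψ : EuclideanSpace ℂ (Fin d))
    (hunit : ‖ψ‖ = 1)
    (hfid : ∀ p : ℕ × ℕ, p.1 < d → p.2 < d → p ≠ (0, 0) →
      ‖(inner ℂ ψ (WithLp.toLp 2 ((DispN d p).mulVec ψ)) : ℂ)‖ ^ 2 = 1 / (d + 1))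
    (φ : OrthonormalBasis (Fin d) ℂ (EuclideanSpace ℂ (Fin d)))
    (hφ0 : φ ⟨0, by omega⟩ = ψ)
    (ψt : EuclideanSpace ℂ (Fin (d - 1) × Fin d))
    (hψt : ∀ (i : Fin (d - 1)) (j : Fin d),
      ψt (i, j) = (1 / (Real.sqrt ((d : ℝ) - 1) : ℂ)) * φ (Fin.cast (by omega) i.succ) j)
    (Dt : ℕ × ℕ → Matrix (Fin (d - 1) × Fin d) (Fin (d - 1) × Fin d) ℂ)
    (hDt : ∀ p a b, Dt p a b = if a.1 = b.1 then DispN d p a.2 b.2 else 0) :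
    ‖ψt‖ = 1 ∧
    ∀ p : ℕ × ℕ, p.1 < d → p.2 < d → p ≠ (0, 0) →
      ‖(inner ℂ ψt (WithLp.toLp 2 ((Dt p).mulVec ψt)) : ℂ)‖ ^ 2
        = 1 / (((d : ℝ) - 1) * ((d : ℝ) ^ 2 - 1)) := by
  obtain ⟨n, rfl⟩ : ∃ n, d = n + 1 := ⟨d - 1, by omega⟩
  have hn : 1 ≤ n := by omega
  set r : ℝ := ((n + 1 : ℕ) : ℝ) - 1 with hrdef
  have hr : r = (n : ℝ) := by push_cast [hrdef]; ring
  have hrpos : 0 < r := by rw [hr]; exact_mod_cast hn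
  set γ : ℂ := 1 / ((Real.sqrt r : ℝ) : ℂ) with hγdef
  -- the embedding Fin (d-1) → Fin d
  have hsucc : ∀ i : Fin (n + 1 - 1),
      (Fin.cast (by omega : n + 1 - 1 + 1 = n + 1) i.succ) = Fin.succ i := by
    intro i; rfl
  -- each basis vector has coordinate-square-sum 1
  have hφnorm : ∀ v : Fin (n+1), ∑ j, ‖φ v j‖ ^ 2 = 1 := by
    intro v
    have h1 : ‖φ v‖ = 1 := φ.orthonormal.1 v
    rw [EuclideanSpace.norm_eq] at h1
    exact Real.sqrt_eq_one.mp h1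
  have hγnorm : ‖γ‖ ^ 2 = 1 / r := by
    rw [hγdef]
    rw [norm_div, norm_one, Complex.norm_real, Real.norm_eq_abs,
      abs_of_nonneg (Real.sqrt_nonneg r)]
    rw [div_pow, one_pow, Real.sq_sqrt hrpos.le]
  constructor
  · -- norm part
    rw [EuclideanSpace.norm_eq]
    have hsum : ∑ a : Fin (n + 1 - 1) × Fin (n+1), ‖ψt a‖ ^ 2 = 1 := by
      rw [Fintype.sum_prod_type]
      have : ∀ i : Fin (n + 1 - 1), ∑ j, ‖ψt (i, j)‖ ^ 2 = 1 / r := by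
        intro i
        have : ∀ j, ‖ψt (i, j)‖ ^ 2 = ‖γ‖^2 * ‖φ (Fin.succ i) j‖ ^ 2 := by
          intro j
          rw [hψt i j, hsucc i, norm_mul, mul_pow, hγdef]
        rw [Finset.sum_congr rfl fun j _ => this j, ← Finset.mul_sum,
          hφnorm (Fin.succ i), mul_one, hγnorm]
      rw [Finset.sum_congr rfl fun i _ => this i, Finset.sum_const]
      have hcard : (Finset.univ : Finset (Fin (n + 1 - 1))).card = n := by simp
      rw [hcard, nsmul_eq_mul, hr]
      field_simp
    rw [hsum, Real.sqrt_one]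
  · -- fiducial part
    intro p hp1 hp2 hp
    set A : Matrix (Fin (n+1)) (Fin (n+1)) ℂ := DispN (n+1) p with hA
    set S : Fin (n+1) → ℂ :=
      fun v => ∑ j, ∑ k, (starRingEnd ℂ) (φ v j) * (A j k * φ v k) with hS
    have hγconj : (starRingEnd ℂ) γ = γ := by
      rw [hγdef, map_div₀, _root_.map_one, Complex.conj_ofReal]
    -- mulVec computation
    have hmv : ∀ (i : Fin (n + 1 - 1)) (j : Fin (n+1)),
        ((Dt p).mulVec ψt) (i, j) = ∑ k, A j k * ψt (i, k) := by
      intro i j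
      rw [Matrix.mulVec, dotProduct, Fintype.sum_prod_type]
      rw [Finset.sum_eq_single i (fun i' _ hne => ?_) (by simp)]
      · apply Finset.sum_congr rfl; intro k _; rw [hDt]; simp [hA]
      · apply Finset.sum_eq_zero; intro k _; rw [hDt]
        simp [(Ne.symm hne : i ≠ i')]
    -- inner product computation
    have hinner : (inner ℂ ψt (WithLp.toLp 2 ((Dt p).mulVec ψt)) : ℂ)
        = γ^2 * ∑ i : Fin (n + 1 - 1), S (Fin.succ i) := by
      rw [PiLp.inner_apply]
      simp only [RCLike.inner_apply]
      rw [Fintype.sum_prod_type, Finset.mul_sum]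
      apply Finset.sum_congr rfl
      intro i _
      rw [hS, Finset.mul_sum]
      apply Finset.sum_congr rfl
      intro j _
      rw [hmv i j, hψt i j, hsucc i, Finset.sum_mul, Finset.mul_sum]
      apply Finset.sum_congr rfl
      intro k _
      rw [hψt i k, hsucc i, _root_.map_mul, hγconj]
      ring
    -- trace is zero
    have htr : ∑ v : Fin (n+1), S v = 0 := by
      rw [hS]
      exact (sum_basis_quad φ A).trans (trace_DispN (n+1) hd p hp1 hp2 hp)
    -- split off the zeroth term
    have hsplit : ∑ v : Fin (n+1), S v = S 0 + ∑ i : Fin n, S (Fin.succ i) :=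
      Fin.sum_univ_succ S
    have hsum_eq : (∑ i : Fin (n + 1 - 1), S (Fin.succ i)) = ∑ i : Fin n, S (Fin.succ i) := rfl
    have hS0 : S 0 = (inner ℂ ψ (WithLp.toLp 2 ((DispN (n+1) p).mulVec ψ)) : ℂ) := by
      have h0 : φ (0 : Fin (n+1)) = ψ := by
        have : (0 : Fin (n+1)) = ⟨0, by omega⟩ := by exact Fin.ext rfl
        rw [this, hφ0]
      rw [hS, PiLp.inner_apply]
      simp only [RCLike.inner_apply]
      apply Finset.sum_congr rfl
      intro j _
      rw [Matrix.mulVec, dotProduct, Finset.sum_mul, h0]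
      apply Finset.sum_congr rfl
      intro k _
      ring
    have hkey : (∑ i : Fin (n + 1 - 1), S (Fin.succ i))
        = -(inner ℂ ψ (WithLp.toLp 2 ((DispN (n+1) p).mulVec ψ)) : ℂ) := by
      rw [hsum_eq, ← hS0]
      have h := hsplit.symm.trans htr
      linear_combination h
    set X : ℂ := (inner ℂ ψ (WithLp.toLp 2 ((DispN (n+1) p).mulVec ψ)) : ℂ) with hX
    rw [hinner, hkey]
    have habs : ‖γ ^ 2 * -X‖ = ‖γ‖ ^ 2 * ‖X‖ := by
      rw [norm_mul, norm_pow, norm_neg]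
    rw [habs, mul_pow]
    have hγabs : ‖γ‖ ^ 2 = 1 / r := by
      exact hγnorm
    rw [hγabs, hfid p hp1 hp2 hp]
    have hrne : r ≠ 0 := ne_of_gt hrpos
    have hD : ((n + 1 : ℕ) : ℝ) = r + 1 := by rw [hr]; push_cast; ring
    rw [hD]
    have h1 : r + 1 + 1 ≠ 0 := by positivity
    have h2 : (r + 1) ^ 2 - 1 = r * (r + 2) := by ring
    rw [h2]
    field_simp
    ring
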